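/- Let P, Q ∈ ℚ⟦q⟧ be the formal power series with constant term 1 whose coefficient of q^k for k ≥ 1 is −24·σ₁(k) for P and 240·σ₃(k) for Q. Then Q − P² is the formal power series whose constant term is 0 and whose coefficient of q^d for d ≥ 1 is 288·d·σ₁(d). -/

import Mathlib

open PowerSeries

/-- σ_k(d): the sum of the k-th powers of the positive divisors of d. -/
def sigma (k d : ℕ) : ℕ := ∑ e ∈ d.divisors, e ^ k

/-- The Eisenstein series `P = E₂`: constant term 1, coefficient of `q^k` equal to
`-24 σ₁(k)` for `k ≥ 1`. -/
noncomputable def Pseries : PowerSeries ℚ :=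
  PowerSeries.mk fun k => if k = 0 then 1 else -24 * (sigma 1 k : ℚ)

/-- The Eisenstein series `Q = E₄`: constant term 1, coefficient of `q^k` equal to
`240 σ₃(k)` for `k ≥ 1`. -/
noncomputable def Qseries : PowerSeries ℚ :=
  PowerSeries.mk fun k => if k = 0 then 1 else 240 * (sigma 3 k : ℚ)



/-- quadruples ((a,b),(x,y)) of positive integers with a*x+b*y = n -/
def quad (n : ℕ) : Finset ((ℕ × ℕ) × (ℕ × ℕ)) :=
  ((Finset.Icc 1 n ×ˢ Finset.Icc 1 n) ×ˢ (Finset.Icc 1 n ×ˢ Finset.Icc 1 n)).filter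
    fun p => p.1.1 * p.2.1 + p.1.2 * p.2.2 = n

lemma mem_quad {n : ℕ} {p : (ℕ × ℕ) × (ℕ × ℕ)} :
    p ∈ quad n ↔ 0 < p.1.1 ∧ 0 < p.1.2 ∧ 0 < p.2.1 ∧ 0 < p.2.2 ∧
      p.1.1 * p.2.1 + p.1.2 * p.2.2 = n := by
  obtain ⟨⟨a, b⟩, x, y⟩ := p
  simp only [quad, Finset.mem_filter, Finset.mem_product, Finset.mem_Icc]
  constructor
  · rintro ⟨⟨⟨⟨ha, -⟩, ⟨hb, -⟩⟩, ⟨hx, -⟩, ⟨hy, -⟩⟩, h⟩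
    exact ⟨ha, hb, hx, hy, h⟩
  · rintro ⟨ha, hb, hx, hy, h⟩
    have h1 : a ≤ a * x := Nat.le_mul_of_pos_right a hx
    have h2 : b ≤ b * y := Nat.le_mul_of_pos_right b hy
    have h3 : x ≤ a * x := Nat.le_mul_of_pos_left x ha
    have h4 : y ≤ b * y := Nat.le_mul_of_pos_left y hb
    exact ⟨⟨⟨⟨ha, by omega⟩, ⟨hb, by omega⟩⟩, ⟨hx, by omega⟩, ⟨hy, by omega⟩⟩, h⟩

/-- the swap (a,b,x,y) ↦ (b,a,y,x) -/
def qswap (p : (ℕ × ℕ) × (ℕ × ℕ)) : (ℕ × ℕ) × (ℕ × ℕ) := ((p.1.2, p.1.1), (p.2.2, p.2.1))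

lemma quad_swap (n : ℕ) (P : (ℕ × ℕ) × (ℕ × ℕ) → Prop) [DecidablePred P]
    (f : (ℕ × ℕ) × (ℕ × ℕ) → ℚ) :
    ∑ p ∈ (quad n).filter P, f p
      = ∑ p ∈ (quad n).filter (fun p => P (qswap p)), f (qswap p) := by
  apply Finset.sum_nbij' qswap qswap
  · intro p hp; obtain ⟨⟨a, b⟩, x, y⟩ := p
    change ((a, b), x, y) ∈ (quad n).filter P at hp
    change qswap ((a, b), x, y) ∈ (quad n).filter (fun p => P (qswap p))
    rw [Finset.mem_filter] at hp ⊢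
    simp only [mem_quad, qswap] at hp ⊢
    refine ⟨⟨hp.1.2.1, hp.1.1, hp.1.2.2.2.1, hp.1.2.2.1, by omega⟩, hp.2⟩
  · intro p hp; obtain ⟨⟨a, b⟩, x, y⟩ := p
    change ((a, b), x, y) ∈ (quad n).filter (fun p => P (qswap p)) at hp
    change qswap ((a, b), x, y) ∈ (quad n).filter P
    rw [Finset.mem_filter] at hp ⊢
    simp only [mem_quad, qswap] at hp ⊢
    refine ⟨⟨hp.1.2.1, hp.1.1, hp.1.2.2.2.1, hp.1.2.2.1, by omega⟩, hp.2⟩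
  · rintro ⟨⟨a, b⟩, x, y⟩ _; rfl
  · rintro ⟨⟨a, b⟩, x, y⟩ _; rfl
  · rintro ⟨⟨a, b⟩, x, y⟩ _; rfl

/-- Liouville-type bijection: quadruples with a > b correspond to quadruples with x < y
via (a,b,x,y) ↦ (a-b, b, x, x+y). -/
lemma quad_bij (n : ℕ) (f : (ℕ × ℕ) × (ℕ × ℕ) → ℚ) :
    ∑ p ∈ (quad n).filter (fun p => p.1.2 < p.1.1), f p
      = ∑ q ∈ (quad n).filter (fun q => q.2.1 < q.2.2),
          f ((q.1.1 + q.1.2, q.1.2), (q.2.1, q.2.2 - q.2.1)) := by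
  apply Finset.sum_nbij' (fun p => ((p.1.1 - p.1.2, p.1.2), (p.2.1, p.2.1 + p.2.2)))
    (fun q => ((q.1.1 + q.1.2, q.1.2), (q.2.1, q.2.2 - q.2.1)))
  · rintro ⟨⟨a, b⟩, x, y⟩ hp
    simp only [Finset.mem_filter, mem_quad] at hp ⊢
    obtain ⟨⟨ha, hb, hx, hy, h⟩, hba⟩ := hp
    have hbx : b * x ≤ a * x := Nat.mul_le_mul_right x hba.le
    refine ⟨⟨by omega, hb, hx, by omega, ?_⟩, by omega⟩
    rw [Nat.sub_mul, Nat.mul_add]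
    omega
  · rintro ⟨⟨a, b⟩, x, y⟩ hq
    simp only [Finset.mem_filter, mem_quad] at hq ⊢
    obtain ⟨⟨ha, hb, hx, hy, h⟩, hxy⟩ := hq
    have hbx : b * x ≤ b * y := Nat.mul_le_mul_left b hxy.le
    refine ⟨⟨by omega, hb, hx, by omega, ?_⟩, by omega⟩
    rw [Nat.add_mul, Nat.mul_sub]
    omega
  · rintro ⟨⟨a, b⟩, x, y⟩ hp
    simp only [Finset.mem_filter, mem_quad] at hp
    dsimp only
    simp only [Prod.mk.injEq, and_true, true_and]
    omega
  · rintro ⟨⟨a, b⟩, x, y⟩ hq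
    simp only [Finset.mem_filter, mem_quad] at hq
    dsimp only
    simp only [Prod.mk.injEq, and_true, true_and]
    omega
  · rintro ⟨⟨a, b⟩, x, y⟩ hp
    simp only [Finset.mem_filter, mem_quad] at hp
    congr 1
    dsimp only
    simp only [Prod.mk.injEq, and_true, true_and]
    omega

lemma sum_trichotomy {α : Type*} [DecidableEq α] (s : Finset α) (f : α → ℚ) (u v : α → ℕ) :
    ∑ p ∈ s, f p
      = ∑ p ∈ s.filter (fun p => v p < u p), f p
        + ∑ p ∈ s.filter (fun p => u p < v p), f p
        + ∑ p ∈ s.filter (fun p => u p = v p), f p := by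
  rw [← Finset.sum_filter_add_sum_filter_not s (fun p => v p < u p) f]
  rw [add_assoc]
  congr 1
  rw [← Finset.sum_filter_add_sum_filter_not (s.filter (fun p => ¬ v p < u p))
    (fun p => u p < v p) f, Finset.filter_filter, Finset.filter_filter]
  congr 2
  · apply Finset.filter_congr; intro p _; constructor <;> intro h <;> omega
  · apply Finset.filter_congr; intro p _; constructor <;> intro h <;> omega

/-- sum of squares: 6 * ∑_{a=0}^{m-1} a² = 2m³ - 3m² + m -/
lemma six_sum_range_sq (m : ℕ) :
    (6 : ℚ) * ∑ a ∈ Finset.range m, (a : ℚ) ^ 2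
      = 2 * (m : ℚ) ^ 3 - 3 * (m : ℚ) ^ 2 + m := by
  induction m with
  | zero => simp
  | succ k ih =>
    rw [Finset.sum_range_succ, mul_add, ih]
    push_cast
    ring

lemma Ico_one_eq_erase (m : ℕ) : Finset.Ico 1 m = (Finset.range m).erase 0 := by
  ext a
  simp [Finset.mem_Ico, Finset.mem_erase, Finset.mem_range]
  omega

lemma six_sum_Ico_sq (m : ℕ) :
    (6 : ℚ) * ∑ a ∈ Finset.Ico 1 m, (a : ℚ) ^ 2
      = 2 * (m : ℚ) ^ 3 - 3 * (m : ℚ) ^ 2 + m := by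
  rw [Ico_one_eq_erase, Finset.sum_erase _ (by simp), six_sum_range_sq]

/-- diagonal a = b : parametrized by a ∣ n and 1 ≤ x < n/a -/
lemma diag_ab (n : ℕ) :
    ∑ p ∈ (quad n).filter (fun p => p.1.1 = p.1.2), ((p.1.1 : ℚ)) ^ 2
      = ∑ t ∈ n.divisors.sigma (fun d => Finset.Ico 1 (n / d)), ((t.1 : ℚ)) ^ 2 := by
  apply Finset.sum_nbij' (fun p => (⟨p.1.1, p.2.1⟩ : (d : ℕ) × ℕ))
    (fun t => ((t.1, t.1), (t.2, n / t.1 - t.2)))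
  · rintro ⟨⟨a, b⟩, x, y⟩ hp
    simp only [Finset.mem_filter, mem_quad] at hp
    obtain ⟨⟨ha, hb, hx, hy, h⟩, hab⟩ := hp
    subst hab
    have hmul : a * (x + y) = n := by rw [Nat.mul_add]; omega
    have hax : 0 < a * x := Nat.mul_pos ha hx
    have hay : 0 < a * y := Nat.mul_pos ha hy
    have hdiv : n / a = x + y := by rw [← hmul, Nat.mul_div_cancel_left _ ha]
    simp only [Finset.mem_sigma, Nat.mem_divisors, Finset.mem_Ico]
    exact ⟨⟨⟨x + y, hmul.symm⟩, by omega⟩, by omega⟩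
  · rintro ⟨d, x⟩ ht
    simp only [Finset.mem_sigma, Nat.mem_divisors, Finset.mem_Ico] at ht
    obtain ⟨⟨hdvd, hn0⟩, hx1, hxlt⟩ := ht
    have hd : 0 < d := Nat.pos_of_mem_divisors (Nat.mem_divisors.mpr ⟨hdvd, hn0⟩)
    simp only [Finset.mem_filter, mem_quad]
    have hsum : x + (n / d - x) = n / d := by omega
    refine ⟨⟨hd, hd, by omega, by omega, ?_⟩, trivial⟩
    rw [← Nat.mul_add, hsum, Nat.mul_div_cancel' hdvd]
  · rintro ⟨⟨a, b⟩, x, y⟩ hp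
    simp only [Finset.mem_filter, mem_quad] at hp
    obtain ⟨⟨ha, hb, hx, hy, h⟩, hab⟩ := hp
    subst hab
    have hmul : a * (x + y) = n := by rw [Nat.mul_add]; omega
    have hdiv : n / a = x + y := by rw [← hmul, Nat.mul_div_cancel_left _ ha]
    dsimp only
    rw [hdiv]
    congr 2
    omega
  · rintro ⟨d, x⟩ ht; rfl
  · rintro ⟨⟨a, b⟩, x, y⟩ hp; rfl

/-- diagonal x = y : parametrized by m = a + b ∣ n and a ∈ Ico 1 m -/
lemma diag_xy (n : ℕ) (F : ℕ → ℕ → ℚ) :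
    ∑ p ∈ (quad n).filter (fun p => p.2.1 = p.2.2), F p.1.1 p.1.2
      = ∑ t ∈ n.divisors.sigma (fun m => Finset.Ico 1 m), F t.2 (t.1 - t.2) := by
  apply Finset.sum_nbij' (fun p => (⟨p.1.1 + p.1.2, p.1.1⟩ : (m : ℕ) × ℕ))
    (fun t => ((t.2, t.1 - t.2), (n / t.1, n / t.1)))
  · rintro ⟨⟨a, b⟩, x, y⟩ hp
    simp only [Finset.mem_filter, mem_quad] at hp
    obtain ⟨⟨ha, hb, hx, hy, h⟩, hxy⟩ := hp
    subst hxy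
    have hmul : (a + b) * x = n := by rw [Nat.add_mul]; omega
    have hax : 0 < a * x := Nat.mul_pos ha hx
    simp only [Finset.mem_sigma, Nat.mem_divisors, Finset.mem_Ico]
    exact ⟨⟨⟨x, hmul.symm⟩, by omega⟩, by omega⟩
  · rintro ⟨m, a⟩ ht
    simp only [Finset.mem_sigma, Nat.mem_divisors, Finset.mem_Ico] at ht
    obtain ⟨⟨hdvd, hn0⟩, ha1, halt⟩ := ht
    have hm : 0 < m := by omega
    have hq : 0 < n / m := Nat.div_pos (Nat.le_of_dvd (Nat.pos_of_ne_zero hn0) hdvd) hm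
    simp only [Finset.mem_filter, mem_quad]
    have hsum : a + (m - a) = m := by omega
    refine ⟨⟨by omega, by omega, hq, hq, ?_⟩, trivial⟩
    rw [← Nat.add_mul, hsum, Nat.mul_div_cancel' hdvd]
  · rintro ⟨⟨a, b⟩, x, y⟩ hp
    simp only [Finset.mem_filter, mem_quad] at hp
    obtain ⟨⟨ha, hb, hx, hy, h⟩, hxy⟩ := hp
    subst hxy
    have hmul : (a + b) * x = n := by rw [Nat.add_mul]; omega
    have hdiv : n / (a + b) = x := by rw [← hmul, Nat.mul_div_cancel_left _ (by omega)]
    dsimp only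
    rw [hdiv]
    congr 2
    omega
  · rintro ⟨m, a⟩ ht
    simp only [Finset.mem_sigma, Nat.mem_divisors, Finset.mem_Ico] at ht
    dsimp only
    have : a + (m - a) = m := by omega
    rw [this]
  · rintro ⟨⟨a, b⟩, x, y⟩ hp
    dsimp only
    have : a + b - a = b := by omega
    rw [this]


lemma sigma_one_eq (i : ℕ) :
    (sigma 1 i : ℚ) = ∑ p ∈ i.divisorsAntidiagonal, (p.1 : ℚ) := by
  rw [Nat.sum_divisorsAntidiagonal (fun a _ => (a : ℚ)), sigma]
  push_cast
  simp [pow_one]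

lemma conv_eq_quad (n : ℕ) :
    ∑ ij ∈ (Finset.HasAntidiagonal.antidiagonal n).filter (fun ij => ij.1 ≠ 0 ∧ ij.2 ≠ 0),
        (sigma 1 ij.1 : ℚ) * (sigma 1 ij.2 : ℚ)
      = ∑ p ∈ quad n, (p.1.1 : ℚ) * (p.1.2 : ℚ) := by
  have h1 : ∀ ij : ℕ × ℕ, (sigma 1 ij.1 : ℚ) * (sigma 1 ij.2 : ℚ)
      = ∑ w ∈ ij.1.divisorsAntidiagonal ×ˢ ij.2.divisorsAntidiagonal,
          (w.1.1 : ℚ) * (w.2.1 : ℚ) := by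
    intro ij
    rw [sigma_one_eq, sigma_one_eq, Finset.sum_mul_sum, Finset.sum_product]
  rw [Finset.sum_congr rfl (fun ij _ => h1 ij), Finset.sum_sigma']
  apply Finset.sum_nbij' (fun t => ((t.2.1.1, t.2.2.1), (t.2.1.2, t.2.2.2)))
    (fun p => ⟨(p.1.1 * p.2.1, p.1.2 * p.2.2), ((p.1.1, p.2.1), (p.1.2, p.2.2))⟩)
  · rintro ⟨⟨i, j⟩, ⟨a, x⟩, ⟨b, y⟩⟩ ht
    simp only [Finset.mem_sigma, Finset.mem_filter, Finset.HasAntidiagonal.mem_antidiagonal,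
      Finset.mem_product, Nat.mem_divisorsAntidiagonal] at ht
    obtain ⟨⟨hij, hi0, hj0⟩, ⟨hax, -⟩, ⟨hby, -⟩⟩ := ht
    simp only [mem_quad]
    have h2 : a ≠ 0 ∧ x ≠ 0 := Nat.mul_ne_zero_iff.mp (by omega)
    have h3 : b ≠ 0 ∧ y ≠ 0 := Nat.mul_ne_zero_iff.mp (by omega)
    exact ⟨by omega, by omega, by omega, by omega, by omega⟩
  · rintro ⟨⟨a, b⟩, x, y⟩ hp
    simp only [mem_quad] at hp
    obtain ⟨ha, hb, hx, hy, h⟩ := hp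
    have hax : 0 < a * x := Nat.mul_pos ha hx
    have hby : 0 < b * y := Nat.mul_pos hb hy
    simp only [Finset.mem_sigma, Finset.mem_filter, Finset.HasAntidiagonal.mem_antidiagonal,
      Finset.mem_product, Nat.mem_divisorsAntidiagonal]
    exact ⟨⟨h, by omega, by omega⟩, ⟨trivial, by omega⟩, ⟨trivial, by omega⟩⟩
  · rintro ⟨⟨i, j⟩, ⟨a, x⟩, ⟨b, y⟩⟩ ht
    simp only [Finset.mem_sigma, Finset.mem_filter, Finset.HasAntidiagonal.mem_antidiagonal,
      Finset.mem_product, Nat.mem_divisorsAntidiagonal] at ht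
    obtain ⟨⟨hij, hi0, hj0⟩, ⟨hax, -⟩, ⟨hby, -⟩⟩ := ht
    dsimp only
    rw [hax, hby]
  · rintro ⟨⟨a, b⟩, x, y⟩ hp; rfl
  · rintro ⟨⟨i, j⟩, ⟨a, x⟩, ⟨b, y⟩⟩ ht; rfl

lemma besge (n : ℕ) (hn : 0 < n) :
    12 * ∑ p ∈ quad n, (p.1.1 : ℚ) * (p.1.2 : ℚ)
      = 5 * (∑ d ∈ n.divisors, (d : ℚ) ^ 3) + (∑ d ∈ n.divisors, (d : ℚ))
        - 6 * n * (∑ d ∈ n.divisors, (d : ℚ)) := by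
  -- abbreviations
  set Q := quad n with hQ
  -- Step 1 : pointwise ring identity
  have e1 : ∑ p ∈ Q, (((p.1.1 : ℚ)) - p.1.2) ^ 2 - ∑ p ∈ Q, (((p.1.1 : ℚ)) + p.1.2) ^ 2
      = -4 * ∑ p ∈ Q, (p.1.1 : ℚ) * (p.1.2 : ℚ) := by
    rw [← Finset.sum_sub_distrib, Finset.mul_sum]
    exact Finset.sum_congr rfl fun p _ => by ring
  -- Step 2 : ∑ (a-b)² = 2 ∑_{x<y} a²
  have tri_ab : ∀ f : (ℕ × ℕ) × (ℕ × ℕ) → ℚ,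
      ∑ p ∈ Q, f p = ∑ p ∈ Q.filter (fun p => p.1.2 < p.1.1), f p
        + ∑ p ∈ Q.filter (fun p => p.1.1 < p.1.2), f p
        + ∑ p ∈ Q.filter (fun p => p.1.1 = p.1.2), f p :=
    fun f => sum_trichotomy Q f (fun p => p.1.1) (fun p => p.1.2)
  have tri_xy : ∀ f : (ℕ × ℕ) × (ℕ × ℕ) → ℚ,
      ∑ p ∈ Q, f p = ∑ p ∈ Q.filter (fun p => p.2.2 < p.2.1), f p
        + ∑ p ∈ Q.filter (fun p => p.2.1 < p.2.2), f p
        + ∑ p ∈ Q.filter (fun p => p.2.1 = p.2.2), f p :=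
    fun f => sum_trichotomy Q f (fun p => p.2.1) (fun p => p.2.2)
  have e2 : ∑ p ∈ Q, (((p.1.1 : ℚ)) - p.1.2) ^ 2
      = 2 * ∑ p ∈ Q.filter (fun p => p.2.1 < p.2.2), ((p.1.1 : ℚ)) ^ 2 := by
    rw [tri_ab (fun p => (((p.1.1 : ℚ)) - p.1.2) ^ 2)]
    have hz : ∑ p ∈ Q.filter (fun p => p.1.1 = p.1.2), (((p.1.1 : ℚ)) - p.1.2) ^ 2 = 0 := by
      apply Finset.sum_eq_zero
      intro p hp
      have h := (Finset.mem_filter.mp hp).2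
      rw [h]; ring
    have hsw : ∑ p ∈ Q.filter (fun p => p.1.1 < p.1.2), (((p.1.1 : ℚ)) - p.1.2) ^ 2
        = ∑ p ∈ Q.filter (fun p => p.1.2 < p.1.1), (((p.1.1 : ℚ)) - p.1.2) ^ 2 := by
      rw [quad_swap n (fun p => p.1.1 < p.1.2) (fun p => (((p.1.1 : ℚ)) - p.1.2) ^ 2)]
      exact Finset.sum_congr rfl fun p _ => by simp only [qswap]; ring
    have hb : ∑ p ∈ Q.filter (fun p => p.1.2 < p.1.1), (((p.1.1 : ℚ)) - p.1.2) ^ 2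
        = ∑ p ∈ Q.filter (fun p => p.2.1 < p.2.2), ((p.1.1 : ℚ)) ^ 2 := by
      rw [quad_bij n (fun p => (((p.1.1 : ℚ)) - p.1.2) ^ 2)]
      apply Finset.sum_congr rfl
      intro p _
      push_cast
      ring
    rw [hz, hsw, hb]
    ring
  -- Step 3 : ∑ (a+b)² = 2 ∑_{b<a} a² + ∑_{x=y} (a+b)²
  have e3 : ∑ p ∈ Q, (((p.1.1 : ℚ)) + p.1.2) ^ 2
      = 2 * ∑ p ∈ Q.filter (fun p => p.1.2 < p.1.1), ((p.1.1 : ℚ)) ^ 2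
        + ∑ p ∈ Q.filter (fun p => p.2.1 = p.2.2), (((p.1.1 : ℚ)) + p.1.2) ^ 2 := by
    rw [tri_xy (fun p => (((p.1.1 : ℚ)) + p.1.2) ^ 2)]
    have hsw : ∑ p ∈ Q.filter (fun p => p.2.2 < p.2.1), (((p.1.1 : ℚ)) + p.1.2) ^ 2
        = ∑ p ∈ Q.filter (fun p => p.2.1 < p.2.2), (((p.1.1 : ℚ)) + p.1.2) ^ 2 := by
      rw [quad_swap n (fun p => p.2.2 < p.2.1) (fun p => (((p.1.1 : ℚ)) + p.1.2) ^ 2)]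
      exact Finset.sum_congr rfl fun p _ => by simp only [qswap]; ring
    have hb : ∑ p ∈ Q.filter (fun p => p.1.2 < p.1.1), ((p.1.1 : ℚ)) ^ 2
        = ∑ p ∈ Q.filter (fun p => p.2.1 < p.2.2), (((p.1.1 : ℚ)) + p.1.2) ^ 2 := by
      rw [quad_bij n (fun p => ((p.1.1 : ℚ)) ^ 2)]
      apply Finset.sum_congr rfl
      intro p _
      push_cast
      ring
    rw [hsw, ← hb]
    ring
  -- Step 4 : ∑_{y<x} a² = ∑_{a<b} a²
  have e4 : ∑ p ∈ Q.filter (fun p => p.2.2 < p.2.1), ((p.1.1 : ℚ)) ^ 2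
      = ∑ p ∈ Q.filter (fun p => p.1.1 < p.1.2), ((p.1.1 : ℚ)) ^ 2 := by
    have s1 : ∑ p ∈ Q.filter (fun p => p.2.2 < p.2.1), ((p.1.1 : ℚ)) ^ 2
        = ∑ p ∈ Q.filter (fun p => p.2.1 < p.2.2), ((p.1.2 : ℚ)) ^ 2 := by
      rw [quad_swap n (fun p => p.2.2 < p.2.1) (fun p => ((p.1.1 : ℚ)) ^ 2)]
      exact Finset.sum_congr rfl fun p _ => by simp only [qswap]
    have s2 : ∑ p ∈ Q.filter (fun p => p.1.2 < p.1.1), ((p.1.2 : ℚ)) ^ 2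
        = ∑ p ∈ Q.filter (fun p => p.2.1 < p.2.2), ((p.1.2 : ℚ)) ^ 2 := by
      rw [quad_bij n (fun p => ((p.1.2 : ℚ)) ^ 2)]
    have s3 : ∑ p ∈ Q.filter (fun p => p.1.2 < p.1.1), ((p.1.2 : ℚ)) ^ 2
        = ∑ p ∈ Q.filter (fun p => p.1.1 < p.1.2), ((p.1.1 : ℚ)) ^ 2 := by
      rw [quad_swap n (fun p => p.1.2 < p.1.1) (fun p => ((p.1.2 : ℚ)) ^ 2)]
      exact Finset.sum_congr rfl fun p _ => by simp only [qswap]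
    rw [s1, ← s2, s3]
  -- Step 5 : combine the two trichotomies for a²
  have e5 : ∑ p ∈ Q.filter (fun p => p.2.1 < p.2.2), ((p.1.1 : ℚ)) ^ 2
        - ∑ p ∈ Q.filter (fun p => p.1.2 < p.1.1), ((p.1.1 : ℚ)) ^ 2
      = ∑ p ∈ Q.filter (fun p => p.1.1 = p.1.2), ((p.1.1 : ℚ)) ^ 2
        - ∑ p ∈ Q.filter (fun p => p.2.1 = p.2.2), ((p.1.1 : ℚ)) ^ 2 := by
    have t1 := tri_ab (fun p => ((p.1.1 : ℚ)) ^ 2)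
    have t2 := tri_xy (fun p => ((p.1.1 : ℚ)) ^ 2)
    have := e4
    linarith
  -- diagonal evaluations
  have d1 : ∑ p ∈ Q.filter (fun p => p.1.1 = p.1.2), ((p.1.1 : ℚ)) ^ 2
      = (n : ℚ) * (∑ d ∈ n.divisors, (d : ℚ)) - ∑ d ∈ n.divisors, (d : ℚ) ^ 2 := by
    rw [hQ, diag_ab n, Finset.sum_sigma, Finset.mul_sum, ← Finset.sum_sub_distrib]
    apply Finset.sum_congr rfl
    intro d hd
    obtain ⟨hdvd, hn0⟩ := Nat.mem_divisors.mp hd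
    have hd0 : 0 < d := Nat.pos_of_mem_divisors hd
    have h1 : 1 ≤ n / d := Nat.div_pos (Nat.le_of_dvd hn hdvd) hd0
    dsimp only
    rw [Finset.sum_const, Nat.card_Ico, nsmul_eq_mul]
    have hcast : ((n / d - 1 : ℕ) : ℚ) = ((n / d : ℕ) : ℚ) - 1 := by
      push_cast [Nat.cast_sub h1]
      ring
    have hnd : ((n / d : ℕ) : ℚ) * (d : ℚ) = (n : ℚ) := by
      rw [← Nat.cast_mul, Nat.div_mul_cancel hdvd]
    rw [hcast]
    nlinarith [hnd]
  have d2 : (6 : ℚ) * ∑ p ∈ Q.filter (fun p => p.2.1 = p.2.2), ((p.1.1 : ℚ)) ^ 2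
      = 2 * (∑ d ∈ n.divisors, (d : ℚ) ^ 3) - 3 * (∑ d ∈ n.divisors, (d : ℚ) ^ 2)
        + (∑ d ∈ n.divisors, (d : ℚ)) := by
    rw [hQ, diag_xy n (fun a _ => ((a : ℚ)) ^ 2), Finset.sum_sigma, Finset.mul_sum,
      Finset.mul_sum, Finset.mul_sum, ← Finset.sum_sub_distrib, ← Finset.sum_add_distrib]
    apply Finset.sum_congr rfl
    intro m hm
    dsimp only
    exact six_sum_Ico_sq m
  have d3 : ∑ p ∈ Q.filter (fun p => p.2.1 = p.2.2), (((p.1.1 : ℚ)) + p.1.2) ^ 2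
      = (∑ d ∈ n.divisors, (d : ℚ) ^ 3) - ∑ d ∈ n.divisors, (d : ℚ) ^ 2 := by
    rw [hQ, diag_xy n (fun a b => ((a : ℚ) + (b : ℚ)) ^ 2), Finset.sum_sigma,
      ← Finset.sum_sub_distrib]
    apply Finset.sum_congr rfl
    intro m hm
    dsimp only
    have hin : ∀ a ∈ Finset.Ico 1 m, ((a : ℚ) + ((m - a : ℕ) : ℚ)) ^ 2 = (m : ℚ) ^ 2 := by
      intro a ha
      obtain ⟨ha1, ham⟩ := Finset.mem_Ico.mp ha
      rw [Nat.cast_sub ham.le]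
      ring
    rw [Finset.sum_congr rfl hin, Finset.sum_const, Nat.card_Ico, nsmul_eq_mul]
    have hm1 : 1 ≤ m := Nat.pos_of_mem_divisors hm
    rw [Nat.cast_sub hm1]
    push_cast
    ring
  -- combine everything
  linarith [e1, e2, e3, e5, d1, d2, d3]

lemma sigma_cast (k n : ℕ) : (sigma k n : ℚ) = ∑ d ∈ n.divisors, (d : ℚ) ^ k := by
  rw [sigma]
  push_cast
  rfl

lemma antidiagonal_split (n : ℕ) (hn : 0 < n) (g : ℕ × ℕ → ℚ) :
    ∑ ij ∈ Finset.HasAntidiagonal.antidiagonal n, g ij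
      = g (0, n) + g (n, 0)
        + ∑ ij ∈ (Finset.HasAntidiagonal.antidiagonal n).filter (fun ij => ij.1 ≠ 0 ∧ ij.2 ≠ 0), g ij := by
  rw [← Finset.sum_filter_add_sum_filter_not (Finset.HasAntidiagonal.antidiagonal n)
    (fun ij => ij.1 ≠ 0 ∧ ij.2 ≠ 0) g, add_comm]
  congr 1
  have hset : (Finset.HasAntidiagonal.antidiagonal n).filter (fun ij => ¬(ij.1 ≠ 0 ∧ ij.2 ≠ 0))
      = {(0, n), (n, 0)} := by
    ext ⟨i, j⟩
    simp only [Finset.mem_filter, Finset.HasAntidiagonal.mem_antidiagonal, Finset.mem_insert,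
      Finset.mem_singleton, Prod.mk.injEq, not_and, ne_eq, not_not]
    constructor
    · rintro ⟨hij, h⟩
      by_cases hi : i = 0
      · left; omega
      · right; omega
    · rintro (⟨hi, hj⟩ | ⟨hi, hj⟩) <;> subst hi <;> subst hj <;> simp
  rw [hset, Finset.sum_insert, Finset.sum_singleton]
  simp only [Finset.mem_singleton, Prod.mk.injEq, not_and]
  intro h
  omega


/-- `Q - P²` is the power series with constant term 0 and coefficient of `q^d` equal to
`288 d σ₁(d)` for `d ≥ 1`. -/
theorem Q_sub_P_sq :
    Qseries - Pseries ^ 2 =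
      PowerSeries.mk fun d => if d = 0 then 0 else 288 * (d : ℚ) * (sigma 1 d : ℚ) := by
  ext n
  rw [map_sub, pow_two, PowerSeries.coeff_mul, PowerSeries.coeff_mk]
  simp only [Qseries, Pseries, PowerSeries.coeff_mk]
  rcases Nat.eq_zero_or_pos n with hn | hn
  · subst hn
    simp
  · have hn' : n ≠ 0 := hn.ne'
    rw [if_neg hn', if_neg hn']
    rw [antidiagonal_split n hn
      (fun ij => (if ij.1 = 0 then (1 : ℚ) else -24 * (sigma 1 ij.1 : ℚ))
        * (if ij.2 = 0 then (1 : ℚ) else -24 * (sigma 1 ij.2 : ℚ)))]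
    have hmid : ∑ ij ∈ (Finset.HasAntidiagonal.antidiagonal n).filter (fun ij => ij.1 ≠ 0 ∧ ij.2 ≠ 0),
        (if ij.1 = 0 then (1 : ℚ) else -24 * (sigma 1 ij.1 : ℚ))
          * (if ij.2 = 0 then (1 : ℚ) else -24 * (sigma 1 ij.2 : ℚ))
        = 576 * ∑ p ∈ quad n, (p.1.1 : ℚ) * (p.1.2 : ℚ) := by
      rw [← conv_eq_quad n, Finset.mul_sum]
      apply Finset.sum_congr rfl
      intro ij hij
      obtain ⟨-, hi, hj⟩ := Finset.mem_filter.mp hij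
      rw [if_neg hi, if_neg hj]
      ring
    rw [hmid]
    dsimp only
    rw [if_pos rfl, if_neg hn']
    have hb := besge n hn
    rw [sigma_cast 1 n, sigma_cast 3 n]
    simp only [pow_one]
    linarith [hb]
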